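/- Let H be an r-uniform hypergraph with cover number at least t. Then there exists a subhypergraph of H (a subset of its edges) with cover number exactly t and at most binomial(r + t − 1, r) edges. -/

import Mathlib

/-- The cover number τ of a hypergraph with vertex type `V` and edge set `E`. -/
noncomputable def coverNum {V : Type*} (E : Finset (Finset V)) : ℕ :=
  sInf {n | ∃ S : Finset V, S.card = n ∧ ∀ e ∈ E, ∃ v ∈ S, v ∈ e}

set_option linter.unusedSectionVars false


open Finset

section split
variable {γ : Type*} [LinearOrder γ]

lemma exists_split (P : Finset γ) :
    ∀ a, a ≤ P.card → ∃ Q ⊆ P, Q.card = a ∧ ∀ x ∈ Q, ∀ y ∈ P, y ∉ Q → x < y := by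
  intro a
  induction a with
  | zero => exact fun _ => ⟨∅, empty_subset _, card_empty, by simp⟩
  | succ n ih =>
    intro h
    obtain ⟨Q, hQP, hQc, hQlt⟩ := ih (Nat.le_of_succ_le h)
    have hne : (P \ Q).Nonempty := by
      rw [← card_pos, card_sdiff_of_subset hQP]; omega
    have hy0 := (P \ Q).min'_mem hne
    rw [mem_sdiff] at hy0
    refine ⟨insert ((P \ Q).min' hne) Q, insert_subset hy0.1 hQP, ?_, ?_⟩
    · rw [card_insert_of_notMem hy0.2, hQc]
    · intro x hx y hy hyQ
      have hyQ' : y ∉ Q := fun hc => hyQ (mem_insert_of_mem hc)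
      rcases mem_insert.mp hx with rfl | hxQ
      · have hmem : y ∈ P \ Q := mem_sdiff.mpr ⟨hy, hyQ'⟩
        have hle := min'_le _ y hmem
        exact lt_of_le_of_ne hle (fun hc => hyQ (hc ▸ mem_insert_self _ _))
      · exact hQlt x hxQ y hy hyQ'

lemma split_unique {P Q Q' : Finset γ} (hQ : Q ⊆ P) (hQ' : Q' ⊆ P) (hc : Q.card = Q'.card)
    (h1 : ∀ x ∈ Q, ∀ y ∈ P, y ∉ Q → x < y) (h2 : ∀ x ∈ Q', ∀ y ∈ P, y ∉ Q' → x < y) :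
    Q = Q' := by
  have hsub : Q ⊆ Q' := by
    intro x hx
    by_contra hxQ'
    have hQ'lt : Q' ⊆ P.filter (· < x) := by
      intro q hq
      exact mem_filter.mpr ⟨hQ' hq, h2 q hq x (hQ hx) hxQ'⟩
    have hlt : P.filter (· < x) ⊆ Q.erase x := by
      intro y hy
      rw [mem_filter] at hy
      refine mem_erase.mpr ⟨ne_of_lt hy.2, ?_⟩
      by_contra hyQ
      exact absurd (h1 x hx y hy.1 hyQ) (not_lt.mpr hy.2.le)
    have := card_le_card (hQ'lt.trans hlt)
    rw [card_erase_of_mem hx] at this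
    have hpos : 0 < Q.card := card_pos.mpr ⟨x, hx⟩
    omega
  exact eq_of_subset_of_card_le hsub (le_of_eq hc.symm)

end split

section cover
variable {V : Type*} [Fintype V] [DecidableEq V]

noncomputable def coverNum' {V : Type*} (E : Finset (Finset V)) : ℕ :=
  sInf {n | ∃ S : Finset V, S.card = n ∧ ∀ e ∈ E, ∃ v ∈ S, v ∈ e}

lemma coverNum'_le {E : Finset (Finset V)} {S : Finset V} (h : ∀ e ∈ E, ∃ v ∈ S, v ∈ e) :
    coverNum' E ≤ S.card := Nat.sInf_le ⟨S, rfl, h⟩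

lemma coverNum'_empty : coverNum' (∅ : Finset (Finset V)) = 0 :=
  Nat.le_zero.mp (by simpa using coverNum'_le (E := (∅ : Finset (Finset V))) (S := ∅) (by simp))

lemma exists_cover {E : Finset (Finset V)} (hne : ∀ e ∈ E, e.Nonempty) :
    ∃ S : Finset V, S.card = coverNum' E ∧ ∀ e ∈ E, ∃ v ∈ S, v ∈ e := by
  have hmem : coverNum' E ∈ {n | ∃ S : Finset V, S.card = n ∧ ∀ e ∈ E, ∃ v ∈ S, v ∈ e} := by
    apply Nat.sInf_mem
    exact ⟨(univ : Finset V).card, univ, rfl, fun e he => (hne e he).imp (fun v hv => ⟨mem_univ v, hv⟩)⟩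
  obtain ⟨S, hS, hcov⟩ := hmem
  exact ⟨S, hS, hcov⟩

end cover

open Finset

section glue
variable {α β : Type*} [DecidableEq α] [DecidableEq β]

def restrictEquiv (σ : α ≃ β) (s : Finset α) (t : Finset β) (h : s.image σ = t) : ↥s ≃ ↥t where
  toFun x := ⟨σ x, h ▸ mem_image_of_mem σ x.2⟩
  invFun y := ⟨σ.symm y, by
    have hy : (y : β) ∈ s.image σ := by rw [h]; exact y.2
    obtain ⟨x, hx, hxy⟩ := mem_image.mp hy
    rw [← hxy, Equiv.symm_apply_apply]; exact hx⟩
  left_inv x := Subtype.ext (σ.symm_apply_apply x)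
  right_inv y := Subtype.ext (σ.apply_symm_apply y)

lemma equiv_image_compl [Fintype α] [Fintype β] (σ : α ≃ β) (s : Finset α) :
    sᶜ.image σ = (s.image σ)ᶜ := by
  ext y
  rw [mem_compl]
  constructor
  · intro h hc
    obtain ⟨x, hx, rfl⟩ := mem_image.mp h
    obtain ⟨x', hx', hxy⟩ := mem_image.mp hc
    rw [mem_compl] at hx
    exact hx (σ.injective hxy ▸ hx')
  · intro h
    exact mem_image.mpr ⟨σ.symm y, mem_compl.mpr
      (fun hc => h (mem_image.mpr ⟨σ.symm y, hc, σ.apply_symm_apply y⟩)), σ.apply_symm_apply y⟩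

variable [Fintype α] [Fintype β]

def glueEquivFun (A B : Finset α) (Q R : Finset β) (hAB : Disjoint A B) (hQR : Disjoint Q R)
    (e₁ : ↥A ≃ ↥Q) (e₂ : ↥B ≃ ↥R) (e₃ : ↥((A ∪ B)ᶜ) ≃ ↥((Q ∪ R)ᶜ)) : α ≃ β where
  toFun x :=
    if h : x ∈ A then (e₁ ⟨x, h⟩ : β)
    else if h' : x ∈ B then (e₂ ⟨x, h'⟩ : β)
    else (e₃ ⟨x, by simp [h, h']⟩ : β)
  invFun y :=
    if h : y ∈ Q then (e₁.symm ⟨y, h⟩ : α)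
    else if h' : y ∈ R then (e₂.symm ⟨y, h'⟩ : α)
    else (e₃.symm ⟨y, by simp [h, h']⟩ : α)
  left_inv x := by
    dsimp only
    by_cases h : x ∈ A
    · rw [dif_pos h, dif_pos (e₁ ⟨x, h⟩).2]
      simp
    · by_cases h' : x ∈ B
      · rw [dif_neg h, dif_pos h', dif_neg (disjoint_right.mp hQR (e₂ ⟨x, h'⟩).2),
          dif_pos (e₂ ⟨x, h'⟩).2]
        simp
      · rw [dif_neg h, dif_neg h']
        have hm := (e₃ ⟨x, by simp [h, h']⟩).2
        simp only [mem_compl, mem_union, not_or] at hm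
        rw [dif_neg hm.1, dif_neg hm.2]
        have : (⟨((e₃ ⟨x, by simp [h, h']⟩ : ↥((Q ∪ R)ᶜ)) : β), by
            simp [hm.1, hm.2]⟩ : ↥((Q ∪ R)ᶜ)) = e₃ ⟨x, by simp [h, h']⟩ := rfl
        rw [this, Equiv.symm_apply_apply]
  right_inv y := by
    dsimp only
    by_cases h : y ∈ Q
    · rw [dif_pos h, dif_pos (e₁.symm ⟨y, h⟩).2]
      simp
    · by_cases h' : y ∈ R
      · rw [dif_neg h, dif_pos h', dif_neg (disjoint_right.mp hAB (e₂.symm ⟨y, h'⟩).2),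
          dif_pos (e₂.symm ⟨y, h'⟩).2]
        simp
      · rw [dif_neg h, dif_neg h']
        have hm := (e₃.symm ⟨y, by simp [h, h']⟩).2
        simp only [mem_compl, mem_union, not_or] at hm
        rw [dif_neg hm.1, dif_neg hm.2]
        have : (⟨((e₃.symm ⟨y, by simp [h, h']⟩ : ↥((A ∪ B)ᶜ)) : α), by
            simp [hm.1, hm.2]⟩ : ↥((A ∪ B)ᶜ)) = e₃.symm ⟨y, by simp [h, h']⟩ := rfl
        rw [this, Equiv.apply_symm_apply]

lemma glueEquivFun_image₁ (A B : Finset α) (Q R : Finset β) (hAB : Disjoint A B)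
    (hQR : Disjoint Q R) (e₁ : ↥A ≃ ↥Q) (e₂ : ↥B ≃ ↥R) (e₃ : ↥((A ∪ B)ᶜ) ≃ ↥((Q ∪ R)ᶜ)) :
    A.image (glueEquivFun A B Q R hAB hQR e₁ e₂ e₃) = Q := by
  ext y
  simp only [mem_image]
  constructor
  · rintro ⟨x, hx, rfl⟩
    show (if h : x ∈ A then (e₁ ⟨x, h⟩ : β) else _) ∈ Q
    rw [dif_pos hx]
    exact (e₁ ⟨x, hx⟩).2
  · intro hy
    refine ⟨(e₁.symm ⟨y, hy⟩ : α), (e₁.symm ⟨y, hy⟩).2, ?_⟩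
    show (if h : ((e₁.symm ⟨y, hy⟩ : α)) ∈ A then (e₁ ⟨_, h⟩ : β) else _) = y
    rw [dif_pos (e₁.symm ⟨y, hy⟩).2]
    have : (⟨((e₁.symm ⟨y, hy⟩ : ↥A) : α), (e₁.symm ⟨y, hy⟩).2⟩ : ↥A) = e₁.symm ⟨y, hy⟩ := rfl
    rw [this, Equiv.apply_symm_apply]

lemma glueEquivFun_image₂ (A B : Finset α) (Q R : Finset β) (hAB : Disjoint A B)
    (hQR : Disjoint Q R) (e₁ : ↥A ≃ ↥Q) (e₂ : ↥B ≃ ↥R) (e₃ : ↥((A ∪ B)ᶜ) ≃ ↥((Q ∪ R)ᶜ)) :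
    B.image (glueEquivFun A B Q R hAB hQR e₁ e₂ e₃) = R := by
  ext y
  simp only [mem_image]
  constructor
  · rintro ⟨x, hx, rfl⟩
    show (if h : x ∈ A then (e₁ ⟨x, h⟩ : β) else if h' : x ∈ B then (e₂ ⟨x, h'⟩ : β) else _) ∈ R
    rw [dif_neg (disjoint_right.mp hAB hx), dif_pos hx]
    exact (e₂ ⟨x, hx⟩).2
  · intro hy
    refine ⟨(e₂.symm ⟨y, hy⟩ : α), (e₂.symm ⟨y, hy⟩).2, ?_⟩
    show (if h : ((e₂.symm ⟨y, hy⟩ : α)) ∈ A then (e₁ ⟨_, h⟩ : β)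
      else if h' : ((e₂.symm ⟨y, hy⟩ : α)) ∈ B then (e₂ ⟨_, h'⟩ : β) else _) = y
    rw [dif_neg (disjoint_right.mp hAB (e₂.symm ⟨y, hy⟩).2), dif_pos (e₂.symm ⟨y, hy⟩).2]
    have : (⟨((e₂.symm ⟨y, hy⟩ : ↥B) : α), (e₂.symm ⟨y, hy⟩).2⟩ : ↥B) = e₂.symm ⟨y, hy⟩ := rfl
    rw [this, Equiv.apply_symm_apply]

noncomputable def glueEquiv (A B : Finset α) (Q R : Finset β) (hAB : Disjoint A B)
    (hQR : Disjoint Q R) :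
    {σ : α ≃ β // A.image σ = Q ∧ B.image σ = R} ≃
      ((↥A ≃ ↥Q) × (↥B ≃ ↥R) × (↥((A ∪ B)ᶜ) ≃ ↥((Q ∪ R)ᶜ))) where
  toFun p :=
    ⟨restrictEquiv p.1 A Q p.2.1, restrictEquiv p.1 B R p.2.2,
      restrictEquiv p.1 ((A ∪ B)ᶜ) ((Q ∪ R)ᶜ)
        (by rw [equiv_image_compl, image_union, p.2.1, p.2.2])⟩
  invFun p :=
    ⟨glueEquivFun A B Q R hAB hQR p.1 p.2.1 p.2.2,
      glueEquivFun_image₁ A B Q R hAB hQR p.1 p.2.1 p.2.2,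
      glueEquivFun_image₂ A B Q R hAB hQR p.1 p.2.1 p.2.2⟩
  left_inv p := by
    apply Subtype.ext
    apply Equiv.ext
    intro x
    show (if h : x ∈ A then _ else if h' : x ∈ B then _ else _) = p.1 x
    by_cases h : x ∈ A
    · rw [dif_pos h]; rfl
    · by_cases h' : x ∈ B
      · rw [dif_neg h, dif_pos h']; rfl
      · rw [dif_neg h, dif_neg h']; rfl
  right_inv p := by
    refine Prod.ext ?_ (Prod.ext ?_ ?_)
    · apply Equiv.ext
      rintro ⟨x, hx⟩
      apply Subtype.ext
      show (if h : x ∈ A then ((p.1 ⟨x, h⟩ : β)) else _) = (p.1 ⟨x, hx⟩ : β)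
      rw [dif_pos hx]
    · apply Equiv.ext
      rintro ⟨x, hx⟩
      apply Subtype.ext
      show (if h : x ∈ A then _ else if h' : x ∈ B then ((p.2.1 ⟨x, h'⟩ : β)) else _)
          = (p.2.1 ⟨x, hx⟩ : β)
      rw [dif_neg (disjoint_right.mp hAB hx), dif_pos hx]
    · apply Equiv.ext
      rintro ⟨x, hx⟩
      apply Subtype.ext
      have hm : x ∉ A ∧ x ∉ B := by
        have := hx; simp only [mem_compl, mem_union, not_or] at this; exact this
      show (if h : x ∈ A then _ else if h' : x ∈ B then _
          else ((p.2.2 ⟨x, _⟩ : β))) = (p.2.2 ⟨x, hx⟩ : β)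
      rw [dif_neg hm.1, dif_neg hm.2]

lemma card_glue (A B : Finset α) (Q R : Finset β) (hAB : Disjoint A B) (hQR : Disjoint Q R)
    (hA : A.card = Q.card) (hB : B.card = R.card) (hN : Fintype.card α = Fintype.card β) :
    Fintype.card {σ : α ≃ β // A.image σ = Q ∧ B.image σ = R}
      = Nat.factorial A.card * (Nat.factorial B.card * Nat.factorial ((A ∪ B)ᶜ.card)) := by
  rw [Fintype.card_congr (glueEquiv A B Q R hAB hQR), Fintype.card_prod, Fintype.card_prod]
  have h1 : Fintype.card (↥A ≃ ↥Q) = Nat.factorial A.card := by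
    rw [Fintype.card_equiv (Fintype.equivOfCardEq (by simp [hA]))]
    simp
  have h2 : Fintype.card (↥B ≃ ↥R) = Nat.factorial B.card := by
    rw [Fintype.card_equiv (Fintype.equivOfCardEq (by simp [hB]))]
    simp
  have hc : ((A ∪ B)ᶜ).card = ((Q ∪ R)ᶜ).card := by
    rw [card_compl, card_compl, card_union_of_disjoint hAB, card_union_of_disjoint hQR,
      hA, hB, hN]
  have h3 : Fintype.card (↥((A ∪ B)ᶜ) ≃ ↥((Q ∪ R)ᶜ)) = Nat.factorial ((A ∪ B)ᶜ.card) := by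
    rw [Fintype.card_equiv (Fintype.equivOfCardEq
      (by rw [Fintype.card_coe, Fintype.card_coe, hc]))]
    rw [Fintype.card_coe]
  rw [h1, h2, h3]

end glue
section bollobas
open Finset

lemma good_card_mul {α β : Type*} [Fintype α] [Fintype β] [DecidableEq α] [DecidableEq β]
    [LinearOrder β] (hN : Fintype.card α = Fintype.card β) (A B : Finset α) (hAB : Disjoint A B) :
    (univ.filter (fun σ : α ≃ β => ∀ x ∈ A, ∀ y ∈ B, σ x < σ y)).card
      * (A.card + B.card).choose A.card = Nat.factorial (Fintype.card α) := by
  set k := A.card + B.card with hk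
  have hDcard : (A ∪ B).card = k := card_union_of_disjoint hAB
  have hkN : k ≤ Fintype.card α := by
    rw [← hDcard, ← card_univ]; exact card_le_univ _
  have Hmap : ∀ σ ∈ univ.filter (fun σ : α ≃ β => ∀ x ∈ A, ∀ y ∈ B, σ x < σ y),
      (A ∪ B).image σ ∈ Finset.powersetCard k (univ : Finset β) := by
    intro σ _
    rw [mem_powersetCard]
    exact ⟨subset_univ _, by rw [card_image_of_injective _ σ.injective, hDcard]⟩
  rw [card_eq_sum_card_fiberwise Hmap]
  have hfib : ∀ P ∈ Finset.powersetCard k (univ : Finset β),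
      ((univ.filter (fun σ : α ≃ β => ∀ x ∈ A, ∀ y ∈ B, σ x < σ y)).filter
        (fun σ : α ≃ β => (A ∪ B).image σ = P)).card
      = Nat.factorial A.card * (Nat.factorial B.card * Nat.factorial ((A ∪ B)ᶜ.card)) := by
    intro P hP
    rw [mem_powersetCard] at hP
    have haP : A.card ≤ P.card := by rw [hP.2]; omega
    obtain ⟨QP, hQsub, hQcard, hQlt⟩ := exists_split P A.card haP
    have hdisjimg : ∀ σ : α ≃ β, Disjoint (A.image σ) (B.image σ) := by
      intro σ
      rw [disjoint_left]
      rintro y hyA hyB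
      obtain ⟨x, hx, rfl⟩ := mem_image.mp hyA
      obtain ⟨x', hx', hxy⟩ := mem_image.mp hyB
      exact disjoint_left.mp hAB hx (σ.injective hxy ▸ hx')
    have hfil : (univ.filter (fun σ : α ≃ β => ∀ x ∈ A, ∀ y ∈ B, σ x < σ y)).filter
        (fun σ : α ≃ β => (A ∪ B).image σ = P)
        = univ.filter (fun σ : α ≃ β => A.image σ = QP ∧ B.image σ = P \ QP) := by
      ext σ
      simp only [mem_filter, mem_univ, true_and]
      constructor
      · rintro ⟨hgood, himg⟩
        have himgA : A.image σ ⊆ P := by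
          rw [← himg]; exact image_subset_image subset_union_left
        have hcardA : (A.image σ).card = A.card := card_image_of_injective _ σ.injective
        have hprop : ∀ x ∈ A.image σ, ∀ y ∈ P, y ∉ A.image σ → x < y := by
          rintro x hx y hy hyA
          obtain ⟨w, hw, rfl⟩ := mem_image.mp hx
          rw [← himg] at hy
          obtain ⟨z, hz, rfl⟩ := mem_image.mp hy
          have hzB : z ∈ B := by
            rcases mem_union.mp hz with hzA | hzB
            · exact absurd (mem_image_of_mem σ hzA) hyA
            · exact hzB
          exact hgood w hw z hzB
        have hQeq : A.image σ = QP :=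
          split_unique himgA hQsub (by rw [hcardA, hQcard]) hprop hQlt
        refine ⟨hQeq, ?_⟩
        rw [← himg, image_union, hQeq, union_sdiff_cancel_left (hQeq ▸ hdisjimg σ)]
      · rintro ⟨hQ, hR⟩
        have hgood : ∀ x ∈ A, ∀ y ∈ B, σ x < σ y := by
          intro x hx y hy
          have h1 : σ x ∈ QP := hQ ▸ mem_image_of_mem σ hx
          have h2 : σ y ∈ P \ QP := hR ▸ mem_image_of_mem σ hy
          rw [mem_sdiff] at h2
          exact hQlt _ h1 _ h2.1 h2.2
        exact ⟨hgood, by rw [image_union, hQ, hR, union_sdiff_of_subset hQsub]⟩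
    rw [hfil]
    have hRcard : (P \ QP).card = B.card := by
      rw [card_sdiff_of_subset hQsub, hQcard, hP.2]; omega
    rw [← Fintype.card_subtype]
    exact card_glue A B QP (P \ QP) hAB disjoint_sdiff hQcard.symm hRcard.symm hN
  rw [Finset.sum_congr rfl hfib, Finset.sum_const, smul_eq_mul, card_powersetCard, card_univ, ← hN]
  have hcompl : (A ∪ B)ᶜ.card = Fintype.card α - k := by rw [card_compl, hDcard]
  rw [hcompl]
  have haK : A.card ≤ k := by omega
  have e1 : Nat.choose k A.card * Nat.factorial A.card * Nat.factorial B.card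
      = Nat.factorial k := by
    have hb : k - A.card = B.card := by omega
    rw [← hb]
    exact Nat.choose_mul_factorial_mul_factorial haK
  have e2 : Nat.choose (Fintype.card α) k * Nat.factorial k
      * Nat.factorial (Fintype.card α - k) = Nat.factorial (Fintype.card α) :=
    Nat.choose_mul_factorial_mul_factorial hkN
  calc Nat.choose (Fintype.card α) k
        * (Nat.factorial A.card * (Nat.factorial B.card * Nat.factorial (Fintype.card α - k)))
        * Nat.choose k A.card
      = (Nat.choose k A.card * Nat.factorial A.card * Nat.factorial B.card)
        * (Nat.choose (Fintype.card α) k * Nat.factorial (Fintype.card α - k)) := by ring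
    _ = Nat.factorial k * (Nat.choose (Fintype.card α) k * Nat.factorial (Fintype.card α - k)) := by
        rw [e1]
    _ = Nat.choose (Fintype.card α) k * Nat.factorial k * Nat.factorial (Fintype.card α - k) := by
        ring
    _ = Nat.factorial (Fintype.card α) := e2

lemma bollobas_core {V : Type*} [Fintype V] [DecidableEq V] (r s : ℕ) (F : Finset (Finset V))
    (Bf : Finset V → Finset V)
    (hA : ∀ e ∈ F, e.card = r) (hBc : ∀ e ∈ F, (Bf e).card ≤ s)
    (hdisj : ∀ e ∈ F, Disjoint e (Bf e))
    (hcross : ∀ e ∈ F, ∀ f ∈ F, e ≠ f → ∃ v ∈ Bf e, v ∈ f) :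
    F.card ≤ (r + s).choose r := by
  set N := Fintype.card V with hNdef
  set G : Finset V → Finset (V ≃ Fin N) :=
    fun e => univ.filter (fun σ => ∀ x ∈ e, ∀ y ∈ Bf e, σ x < σ y) with hGdef
  have hGcard : ∀ e ∈ F, Nat.factorial N ≤ (G e).card * (r + s).choose r := by
    intro e he
    have hg := good_card_mul (β := Fin N) (by rw [Fintype.card_fin]) e (Bf e) (hdisj e he)
    have hle : (e.card + (Bf e).card).choose e.card ≤ (r + s).choose r := by
      rw [hA e he]
      exact Nat.choose_le_choose r (Nat.add_le_add_left (hBc e he) r)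
    calc Nat.factorial N = (G e).card * (e.card + (Bf e).card).choose e.card := hg.symm
      _ ≤ (G e).card * (r + s).choose r := Nat.mul_le_mul_left _ hle
  have hdisjG : ∀ e ∈ F, ∀ f ∈ F, e ≠ f → Disjoint (G e) (G f) := by
    intro e he f hf hef
    rw [Finset.disjoint_left]
    intro σ hσe hσf
    rw [hGdef, mem_filter] at hσe hσf
    obtain ⟨v, hvB, hvf⟩ := hcross e he f hf hef
    obtain ⟨w, hwB, hwe⟩ := hcross f hf e he (Ne.symm hef)
    exact absurd ((hσe.2 w hwe v hvB).trans (hσf.2 v hvf w hwB)) (lt_irrefl _)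
  have hsum : (∑ e ∈ F, (G e).card) ≤ Nat.factorial N := by
    rw [← Finset.card_biUnion hdisjG]
    calc (F.biUnion G).card ≤ (univ : Finset (V ≃ Fin N)).card := card_le_univ _
      _ = Nat.factorial N := by
          rw [card_univ, Fintype.card_equiv (Fintype.equivFinOfCardEq rfl)]
  have hmain : F.card * Nat.factorial N ≤ (r + s).choose r * Nat.factorial N := by
    calc F.card * Nat.factorial N = ∑ _e ∈ F, Nat.factorial N := by
          rw [Finset.sum_const, smul_eq_mul]
      _ ≤ ∑ e ∈ F, (G e).card * (r + s).choose r := Finset.sum_le_sum hGcard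
      _ = (∑ e ∈ F, (G e).card) * (r + s).choose r := by rw [Finset.sum_mul]
      _ ≤ Nat.factorial N * (r + s).choose r := Nat.mul_le_mul_right _ hsum
      _ = (r + s).choose r * Nat.factorial N := by ring
  exact Nat.le_of_mul_le_mul_right hmain (Nat.factorial_pos N)

end bollobas
section main
open Finset
/-- Bollobás: an r-uniform hypergraph with cover number at least `t` has a
subhypergraph with cover number exactly `t` and at most `(r+t-1).choose r` edges. -/

theorem stmt_11 {V : Type*} [Fintype V] [DecidableEq V] (r t : ℕ)
    (E : Finset (Finset V)) (hu : ∀ e ∈ E, e.card = r) (ht : t ≤ coverNum E) :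
    ∃ E' ⊆ E, coverNum E' = t ∧ E'.card ≤ (r + t - 1).choose r := by
  have hcn : ∀ (F : Finset (Finset V)), coverNum F = coverNum' F := fun _ => rfl
  rcases Nat.eq_zero_or_pos t with rfl | ht1
  · exact ⟨∅, empty_subset _, by rw [hcn]; exact coverNum'_empty, Nat.zero_le _⟩
  have hne : ∀ e ∈ E, e.Nonempty := by
    intro e he
    rw [nonempty_iff_ne_empty]
    rintro rfl
    have h0 : coverNum E = 0 := by
      rw [hcn]
      unfold coverNum'
      convert Nat.sInf_empty
      rw [Set.eq_empty_iff_forall_notMem]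
      rintro n ⟨S, _, hS⟩
      obtain ⟨v, _, hv⟩ := hS ∅ he
      exact absurd hv (notMem_empty v)
    omega
  set Scand := (E.powerset).filter (fun F => t ≤ coverNum' F) with hScand
  have hSne : Scand.Nonempty :=
    ⟨E, mem_filter.mpr ⟨mem_powerset_self E, by rw [← hcn]; exact ht⟩⟩
  obtain ⟨E'', hE''mem, hmin⟩ := Scand.exists_minimal hSne
  rw [hScand, mem_filter, mem_powerset] at hE''mem
  obtain ⟨hE''sub, hE''t⟩ := hE''mem
  have hneE'' : ∀ e ∈ E'', e.Nonempty := fun e he => hne e (hE''sub he)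
  have hminlt : ∀ F, F ⊂ E'' → coverNum' F < t := by
    intro F hF
    by_contra hc
    push_neg at hc
    exact hF.2 (hmin (mem_filter.mpr ⟨mem_powerset.mpr (hF.subset.trans hE''sub), hc⟩) hF.subset)
  have hE''card : coverNum' E'' ≤ t := by
    obtain ⟨e, he⟩ : E''.Nonempty := by
      by_contra hc
      rw [not_nonempty_iff_eq_empty] at hc
      rw [hc, coverNum'_empty] at hE''t
      omega
    obtain ⟨S, hScard, hScov⟩ :=
      exists_cover (E := E''.erase e) (fun f hf => hneE'' f (mem_of_mem_erase hf))
    obtain ⟨v, hv⟩ := hneE'' e he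
    have hcov : ∀ f ∈ E'', ∃ w ∈ insert v S, w ∈ f := by
      intro f hf
      by_cases hfe : f = e
      · exact ⟨v, mem_insert_self _ _, hfe ▸ hv⟩
      · obtain ⟨w, hw, hwf⟩ := hScov f (mem_erase.mpr ⟨hfe, hf⟩)
        exact ⟨w, mem_insert_of_mem hw, hwf⟩
    have hlt := hminlt _ (erase_ssubset he)
    calc coverNum' E'' ≤ (insert v S).card := coverNum'_le hcov
      _ ≤ S.card + 1 := card_insert_le _ _
      _ ≤ t := by omega
  have hkey : ∀ e : Finset V, ∃ S : Finset V, e ∈ E'' →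
      (S.card ≤ t - 1 ∧ (∀ f ∈ E''.erase e, ∃ w ∈ S, w ∈ f)) := by
    intro e
    by_cases he : e ∈ E''
    · obtain ⟨S, hScard, hScov⟩ :=
        exists_cover (E := E''.erase e) (fun f hf => hneE'' f (mem_of_mem_erase hf))
      refine ⟨S, fun _ => ⟨?_, hScov⟩⟩
      have := hminlt _ (erase_ssubset he)
      omega
    · exact ⟨∅, fun h => absurd h he⟩
  choose Bf hBf using hkey
  have hdisj : ∀ e ∈ E'', Disjoint e (Bf e) := by
    intro e he
    rw [disjoint_left]
    intro v hve hvB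
    have hcov : ∀ f ∈ E'', ∃ w ∈ Bf e, w ∈ f := by
      intro f hf
      by_cases hfe : f = e
      · exact ⟨v, hvB, hfe ▸ hve⟩
      · exact (hBf e he).2 f (mem_erase.mpr ⟨hfe, hf⟩)
    have h1 := coverNum'_le hcov
    have h2 := (hBf e he).1
    omega
  have hcross : ∀ e ∈ E'', ∀ f ∈ E'', e ≠ f → ∃ v ∈ Bf e, v ∈ f := by
    intro e he f hf hef
    exact (hBf e he).2 f (mem_erase.mpr ⟨Ne.symm hef, hf⟩)
  have hcard := bollobas_core r (t - 1) E'' Bf (fun e he => hu e (hE''sub he))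
    (fun e he => (hBf e he).1) hdisj hcross
  refine ⟨E'', hE''sub, ?_, ?_⟩
  · rw [hcn]; exact le_antisymm hE''card hE''t
  · have heq : r + (t - 1) = r + t - 1 := by omega
    rw [← heq]
    exact hcard

end main
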